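/- Let (Ω, 𝔉, ℙ) be a probability space, 𝔊 ⊆ 𝔉 a sub-σ-algebra, and X a separable real Hilbert space. Let X_ad ⊆ X be a nonempty, closed, convex set, π : X → X the metric projection onto X_ad (characterized by π(z) ∈ X_ad and ⟨z − π(z), w − π(z)⟩_X ≤ 0 for all w ∈ X_ad, z ∈ X), and j : X → ℝ Fréchet differentiable with gradient ∇j : X → X (the X-Riesz representative of Dj). Assume j is convex on X_ad, so that j(h₂) ≥ j(h₁) + ⟨∇j(h₁), h₂ − h₁⟩_X for all h₁, h₂ ∈ X_ad. Let h : Ω → X be a 𝔊-measurable random variable with values in X_ad, h* ∈ X_ad a point satisfying ⟨∇j(h*), w − h*⟩_X ≥ 0 for all w ∈ X_ad, t ≥ 0, and g : Ω → X a Bochner square-integrable random variable such that, almost surely, E[g | 𝔊] = ∇j(h) + b for a 𝔊-measurable b : Ω → X with ‖b‖_X ≤ K almost surely, and E[‖g‖_X² | 𝔊] ≤ M almost surely. Then, almost surely, E[ ‖π(h − t·g) − h*‖_X² | 𝔊 ] ≤ ‖h − h*‖_X² − 2t·( j(h) − j(h*) ) + 2t·K·‖h − h*‖_X + t²·M. 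-/

import Mathlib

open MeasureTheory
open scoped RealInnerProductSpace

section SGMHelpers

lemma condExpL2_ae_eq_condExp' {Ω : Type*} {mG mF : MeasurableSpace Ω} {μ : Measure Ω}
    [IsFiniteMeasure μ] (hG : mG ≤ mF)
    {X : Type*} [NormedAddCommGroup X] [InnerProductSpace ℝ X] [CompleteSpace X]
    (g : Ω → X) (hg : MemLp g 2 μ) :
    ((condExpL2 X ℝ hG (hg.toLp g) : Ω →₂[μ] X) : Ω → X) =ᵐ[μ] μ[g | mG] := by
  refine ae_eq_condExp_of_forall_setIntegral_eq hG (hg.integrable one_le_two)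
    (fun s _ _ => (integrable_condExpL2_of_isFiniteMeasure (μ := μ) hG).integrableOn) ?_ ?_
  · intro s hs hμs
    rw [integral_condExpL2_eq hG (hg.toLp g) hs hμs.ne]
    exact integral_congr_ae (ae_restrict_of_ae hg.coeFn_toLp)
  · exact aestronglyMeasurable_condExpL2 hG _

lemma condExp_inner_stronglyMeasurable' {Ω : Type*} {mG mF : MeasurableSpace Ω} {μ : Measure Ω}
    [IsFiniteMeasure μ] (hG : mG ≤ mF)
    {X : Type*} [NormedAddCommGroup X] [InnerProductSpace ℝ X] [CompleteSpace X]
    (g : Ω → X) (hg : MemLp g 2 μ)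
    (u : Ω → X) (hu : StronglyMeasurable[mG] u) (c : ℝ) (hc : 0 ≤ c)
    (hbdd : ∀ ω, ‖u ω‖ ≤ c) :
    μ[(fun ω => ⟪g ω, u ω⟫) | mG] =ᵐ[μ] fun ω => ⟪(μ[g | mG]) ω, u ω⟫ := by
  have hg_int : Integrable g μ := hg.integrable one_le_two
  have huF : AEStronglyMeasurable u μ := (hu.mono hG).aestronglyMeasurable
  have hinn_int : Integrable (fun ω => ⟪g ω, u ω⟫) μ := by
    refine Integrable.mono' (hg_int.norm.mul_const c) (hg.aestronglyMeasurable.inner huF) ?_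
    filter_upwards with ω
    calc ‖⟪g ω, u ω⟫‖ ≤ ‖g ω‖ * ‖u ω‖ := norm_inner_le_norm _ _
      _ ≤ ‖g ω‖ * c := by gcongr; exact hbdd ω
  have hG_int : Integrable (μ[g | mG]) μ := integrable_condExp
  have hGsm : StronglyMeasurable[mG] (μ[g | mG]) := stronglyMeasurable_condExp
  refine (ae_eq_condExp_of_forall_setIntegral_eq hG hinn_int ?_ ?_ ?_).symm
  · intro s _ _
    refine (Integrable.mono' (hG_int.norm.mul_const c)
      ((hGsm.mono hG).aestronglyMeasurable.inner huF) ?_).integrableOn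
    filter_upwards with ω
    calc ‖⟪(μ[g | mG]) ω, u ω⟫‖ ≤ ‖(μ[g | mG]) ω‖ * ‖u ω‖ := norm_inner_le_norm _ _
      _ ≤ ‖(μ[g | mG]) ω‖ * c := by gcongr; exact hbdd ω
  · intro s hs _
    set w' : Ω → X := s.indicator u with hw'def
    have hw'm : StronglyMeasurable[mG] w' := hu.indicator hs
    have hw'mem : MemLp w' 2 μ := by
      refine MemLp.of_bound (hw'm.mono hG).aestronglyMeasurable c ?_
      filter_upwards with ω
      by_cases hω : ω ∈ s
      · simpa [hw'def, Set.indicator_of_mem hω] using hbdd ω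
      · simpa [hw'def, Set.indicator_of_notMem hω] using hc
    have hindig : ∀ (v : Ω → X) (x : Ω), ⟪v x, w' x⟫ = s.indicator (fun y => ⟪v y, u y⟫) x := by
      intro v x
      by_cases hx : x ∈ s
      · simp [hw'def, Set.indicator_of_mem hx]
      · simp [hw'def, Set.indicator_of_notMem hx]
    have key : ∫ x, ⟪((condExpL2 X ℝ hG (hg.toLp g) : Ω →₂[μ] X) : Ω → X) x,
          ((hw'mem.toLp w' : Ω →₂[μ] X) : Ω → X) x⟫ ∂μ
        = ∫ x, ⟪((hg.toLp g : Ω →₂[μ] X) : Ω → X) x,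
          ((hw'mem.toLp w' : Ω →₂[μ] X) : Ω → X) x⟫ ∂μ := by
      have := inner_condExpL2_eq_inner_fun (𝕜 := ℝ) hG (hg.toLp g) (hw'mem.toLp w')
        ⟨w', hw'm, hw'mem.coeFn_toLp⟩
      rw [L2.inner_def, L2.inner_def] at this
      exact this
    calc ∫ x in s, ⟪(μ[g | mG]) x, u x⟫ ∂μ
        = ∫ x, s.indicator (fun y => ⟪(μ[g | mG]) y, u y⟫) x ∂μ := by
          rw [integral_indicator (hG s hs)]
      _ = ∫ x, ⟪((condExpL2 X ℝ hG (hg.toLp g) : Ω →₂[μ] X) : Ω → X) x,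
            ((hw'mem.toLp w' : Ω →₂[μ] X) : Ω → X) x⟫ ∂μ := by
          refine integral_congr_ae ?_
          filter_upwards [condExpL2_ae_eq_condExp' hG g hg, hw'mem.coeFn_toLp] with x hx hWx
          rw [hWx, hindig]
          by_cases hx' : x ∈ s
          · rw [Set.indicator_of_mem hx', Set.indicator_of_mem hx', hx]
          · rw [Set.indicator_of_notMem hx', Set.indicator_of_notMem hx']
      _ = ∫ x, ⟪((hg.toLp g : Ω →₂[μ] X) : Ω → X) x,
            ((hw'mem.toLp w' : Ω →₂[μ] X) : Ω → X) x⟫ ∂μ := key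
      _ = ∫ x, s.indicator (fun y => ⟪g y, u y⟫) x ∂μ := by
          refine integral_congr_ae ?_
          filter_upwards [hg.coeFn_toLp, hw'mem.coeFn_toLp] with x hx hWx
          rw [hWx, hindig]
          by_cases hx' : x ∈ s
          · rw [Set.indicator_of_mem hx', Set.indicator_of_mem hx', hx]
          · rw [Set.indicator_of_notMem hx', Set.indicator_of_notMem hx']
      _ = ∫ x in s, ⟪g x, u x⟫ ∂μ := by rw [integral_indicator (hG s hs)]
  · exact (hGsm.inner hu).aestronglyMeasurable

lemma condExp_norm_sq_le' {Ω : Type*} {mG mF : MeasurableSpace Ω} {μ : Measure Ω}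
    [IsFiniteMeasure μ] (hG : mG ≤ mF)
    {X : Type*} [NormedAddCommGroup X] [InnerProductSpace ℝ X] [CompleteSpace X]
    [TopologicalSpace.SeparableSpace X]
    (g : Ω → X) (hg : MemLp g 2 μ) (M : ℝ)
    (hM : μ[(fun ω => ‖g ω‖ ^ 2) | mG] ≤ᵐ[μ] fun _ => M) :
    ∀ᵐ ω ∂μ, ‖(μ[g | mG]) ω‖ ^ 2 ≤ M := by
  haveI : Nonempty X := ⟨0⟩
  have hgi : Integrable g μ := hg.integrable one_le_two
  have hgn : Integrable (fun ω => ‖g ω‖) μ := hgi.norm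
  have hgn2 : Integrable (fun ω => ‖g ω‖ ^ 2) μ :=
    (memLp_two_iff_integrable_sq_norm hg.aestronglyMeasurable).mp hg
  set Y := μ[(fun ω => ‖g ω‖) | mG] with hYdef
  have hY0 : 0 ≤ᵐ[μ] Y := condExp_nonneg (Filter.Eventually.of_forall fun ω => norm_nonneg _)
  have hq : ∀ q : ℚ, ∀ᵐ ω ∂μ,
      2 * (q : ℝ) * Y ω - (q : ℝ) ^ 2 ≤ (μ[(fun ω => ‖g ω‖ ^ 2) | mG]) ω := by
    intro q
    have hnn : 0 ≤ᵐ[μ] μ[(fun ω => (‖g ω‖ - (q : ℝ)) ^ 2) | mG] :=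
      condExp_nonneg (Filter.Eventually.of_forall fun ω => sq_nonneg _)
    have h1 : (fun ω => (‖g ω‖ - (q : ℝ)) ^ 2)
        = (fun ω => (‖g ω‖ ^ 2 - (2 * (q : ℝ)) * ‖g ω‖) + (q : ℝ) ^ 2) :=
      funext fun ω => by ring
    have hsub : Integrable (fun ω => ‖g ω‖ ^ 2 - (2 * (q : ℝ)) * ‖g ω‖) μ :=
      hgn2.sub (hgn.const_mul _)
    have hexp : μ[(fun ω => (‖g ω‖ - (q : ℝ)) ^ 2) | mG] =ᵐ[μ]
        fun ω => ((μ[(fun ω => ‖g ω‖ ^ 2) | mG]) ω - 2 * (q : ℝ) * Y ω) + (q : ℝ) ^ 2 := by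
      rw [h1]
      have e1 : μ[(fun ω => (‖g ω‖ ^ 2 - (2 * (q : ℝ)) * ‖g ω‖) + (q : ℝ) ^ 2) | mG] =ᵐ[μ]
          μ[(fun ω => ‖g ω‖ ^ 2 - (2 * (q : ℝ)) * ‖g ω‖) | mG]
            + μ[(fun _ => (q : ℝ) ^ 2) | mG] :=
        condExp_add hsub (integrable_const _) mG
      have e2 : μ[(fun ω => ‖g ω‖ ^ 2 - (2 * (q : ℝ)) * ‖g ω‖) | mG] =ᵐ[μ]
          μ[(fun ω => ‖g ω‖ ^ 2) | mG] - μ[(fun ω => (2 * (q : ℝ)) * ‖g ω‖) | mG] :=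
        condExp_sub hgn2 (hgn.const_mul _) mG
      have e3 : μ[(fun ω => (2 * (q : ℝ)) * ‖g ω‖) | mG] =ᵐ[μ]
          fun ω => (2 * (q : ℝ)) * Y ω := by
        have h4 : (fun ω => (2 * (q : ℝ)) * ‖g ω‖) = (2 * (q : ℝ)) • (fun ω => ‖g ω‖) :=
          funext fun ω => by simp [smul_eq_mul]
        rw [h4]
        filter_upwards [condExp_smul (μ := μ) (m := mG) (2 * (q : ℝ)) (fun ω => ‖g ω‖)]
          with ω hω
        simp only [hω, Pi.smul_apply, smul_eq_mul, hYdef]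
      have e4 : μ[(fun _ => (q : ℝ) ^ 2) | mG] =ᵐ[μ] fun _ => (q : ℝ) ^ 2 := by
        rw [condExp_const hG]
      filter_upwards [e1, e2, e3, e4] with ω h1' h2' h3' h4'
      simp only [Pi.add_apply, Pi.sub_apply] at h1' h2'
      rw [h1', h2', h3', h4']
    filter_upwards [hnn, hexp] with ω h0 hE
    rw [hE] at h0
    simp only [Pi.zero_apply] at h0
    linarith
  have hYM : ∀ᵐ ω ∂μ, Y ω ^ 2 ≤ M := by
    filter_upwards [ae_all_iff.2 hq, hM, hY0] with ω hω hMω hY0ω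
    refine le_of_forall_pos_le_add fun ε hε => ?_
    obtain ⟨q, hq1, hq2⟩ := exists_rat_btwn (show Y ω - min ε 1 < Y ω from
      sub_lt_self _ (lt_min hε one_pos))
    have h2q := (hω q).trans hMω
    have hm1 : min ε 1 ≤ ε := min_le_left _ _
    have hm2 : min ε 1 ≤ 1 := min_le_right _ _
    nlinarith [sq_nonneg (Y ω - (q : ℝ))]
  have hdir : ∀ k : ℕ, ∀ᵐ ω ∂μ,
      ⟪(μ[g | mG]) ω, TopologicalSpace.denseSeq X k⟫ ≤ ‖TopologicalSpace.denseSeq X k‖ * Y ω := by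
    intro k
    set c := TopologicalSpace.denseSeq X k with hcdef
    have h1 := condExp_inner_stronglyMeasurable' hG g hg (fun _ => c)
      stronglyMeasurable_const ‖c‖ (norm_nonneg _) (fun _ => le_rfl)
    have hinn_int : Integrable (fun ω => ⟪g ω, c⟫) μ := by
      refine Integrable.mono' (hgn.mul_const ‖c‖)
        (hg.aestronglyMeasurable.inner aestronglyMeasurable_const) ?_
      filter_upwards with ω
      exact norm_inner_le_norm _ _
    have h2 : μ[(fun ω => ⟪g ω, c⟫) | mG] ≤ᵐ[μ] μ[(fun ω => ‖c‖ * ‖g ω‖) | mG] := by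
      refine condExp_mono hinn_int (hgn.const_mul _)
        (Filter.Eventually.of_forall fun ω => ?_)
      calc ⟪g ω, c⟫ ≤ ‖g ω‖ * ‖c‖ := real_inner_le_norm _ _
        _ = ‖c‖ * ‖g ω‖ := mul_comm _ _
    have h3 : μ[(fun ω => ‖c‖ * ‖g ω‖) | mG] =ᵐ[μ] fun ω => ‖c‖ * Y ω := by
      have h4 : (fun ω => ‖c‖ * ‖g ω‖) = ‖c‖ • (fun ω => ‖g ω‖) :=
        funext fun ω => by simp [smul_eq_mul]
      rw [h4]
      filter_upwards [condExp_smul (μ := μ) (m := mG) ‖c‖ (fun ω => ‖g ω‖)] with ω hω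
      simp only [hω, Pi.smul_apply, smul_eq_mul, hYdef]
    filter_upwards [h1, h2, h3] with ω e1 e2 e3
    exact le_of_eq_of_le e1.symm (e2.trans_eq e3)
  filter_upwards [ae_all_iff.2 hdir, hYM, hY0] with ω hk hY2 hY0ω
  set y := (μ[g | mG]) ω with hy
  have hally : ∀ c : X, ⟪y, c⟫ ≤ ‖c‖ * Y ω := by
    have hcl : IsClosed {c : X | ⟪y, c⟫ ≤ ‖c‖ * Y ω} :=
      isClosed_le (Continuous.inner continuous_const continuous_id)
        (continuous_norm.mul continuous_const)
    intro c
    have hsub : Set.range (TopologicalSpace.denseSeq X) ⊆ {c : X | ⟪y, c⟫ ≤ ‖c‖ * Y ω} :=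
      Set.range_subset_iff.2 hk
    have hc : c ∈ closure (Set.range (TopologicalSpace.denseSeq X)) :=
      (TopologicalSpace.denseRange_denseSeq X) c
    have hmem := closure_mono hsub hc
    rwa [hcl.closure_eq] at hmem
  have hyy := hally y
  rw [real_inner_self_eq_norm_sq] at hyy
  nlinarith [norm_nonneg y, sq_nonneg (‖y‖ - Y ω)]

end SGMHelpers

/-- Key one-step conditional recursion estimate for the projected stochastic
gradient method: given a sub-σ-algebra `𝔊`, a `𝔊`-measurable iterate `h` with values
in `X_ad`, a stationary point `h*`, a step size `t ≥ 0` and a square-integrable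
stochastic gradient `g` with conditional expectation `∇j(h) + b` (bias `‖b‖ ≤ K` a.s.)
and conditional second moment `≤ M`, the projected step satisfies, almost surely,
`E[‖π(h − t g) − h*‖² | 𝔊] ≤ ‖h − h*‖² − 2t(j(h) − j(h*)) + 2tK‖h − h*‖ + t²M`. -/
theorem sgm_one_step_conditional_estimate
    {Ω : Type*} {mF : MeasurableSpace Ω} (μ : Measure Ω) [IsProbabilityMeasure μ]
    (mG : MeasurableSpace Ω) (hG : mG ≤ mF)
    {X : Type*} [NormedAddCommGroup X] [InnerProductSpace ℝ X] [CompleteSpace X]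
    [TopologicalSpace.SeparableSpace X]
    (Xad : Set X) (hne : Xad.Nonempty) (hclosed : IsClosed Xad) (hconv : Convex ℝ Xad)
    (proj : X → X)
    (hproj_mem : ∀ z : X, proj z ∈ Xad)
    (hproj_char : ∀ z : X, ∀ w ∈ Xad, ⟪z - proj z, w - proj z⟫ ≤ 0)
    (j : X → ℝ) (gradj : X → X)
    (hdiff : ∀ x : X, HasGradientAt j (gradj x) x)
    (hconvex : ∀ h₁ ∈ Xad, ∀ h₂ ∈ Xad, j h₂ ≥ j h₁ + ⟪gradj h₁, h₂ - h₁⟫)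
    (h : Ω → X) (hmeas : StronglyMeasurable[mG] h) (hval : ∀ ω, h ω ∈ Xad)
    (hstar : X) (hstar_mem : hstar ∈ Xad)
    (hVI : ∀ w ∈ Xad, ⟪gradj hstar, w - hstar⟫ ≥ 0)
    (t : ℝ) (ht : 0 ≤ t)
    (g : Ω → X) (hg : MemLp g 2 μ)
    (b : Ω → X) (hb : StronglyMeasurable[mG] b)
    (K : ℝ) (hK : ∀ᵐ ω ∂μ, ‖b ω‖ ≤ K)
    (hcond : μ[g | mG] =ᵐ[μ] fun ω => gradj (h ω) + b ω)
    (M : ℝ) (hM : μ[(fun ω => ‖g ω‖ ^ 2) | mG] ≤ᵐ[μ] fun _ => M) :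
    μ[(fun ω => ‖proj (h ω - t • g ω) - hstar‖ ^ 2) | mG]
      ≤ᵐ[μ] fun ω =>
        ‖h ω - hstar‖ ^ 2 - 2 * t * (j (h ω) - j hstar)
          + 2 * t * K * ‖h ω - hstar‖ + t ^ 2 * M := by
  classical
  -- basic facts about the projection
  have hPle : ∀ z : X, ∀ w ∈ Xad, ‖proj z - w‖ ^ 2 ≤ ‖z - w‖ ^ 2 := by
    intro z w hw
    have hch := hproj_char z w hw
    have hexp : ‖z - w‖ ^ 2
        = ‖z - proj z‖ ^ 2 + 2 * ⟪z - proj z, proj z - w⟫ + ‖proj z - w‖ ^ 2 := by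
      have hsum := norm_add_sq_real (z - proj z) (proj z - w)
      rw [sub_add_sub_cancel] at hsum
      linarith
    have h2 : 0 ≤ ⟪z - proj z, proj z - w⟫ := by
      have hneg : proj z - w = -(w - proj z) := (neg_sub _ _).symm
      rw [hneg, inner_neg_right]
      linarith
    nlinarith [sq_nonneg ‖z - proj z‖]
  have hlip : ∀ z₁ z₂ : X, ‖proj z₁ - proj z₂‖ ≤ ‖z₁ - z₂‖ := by
    intro z1 z2
    have h1 := hproj_char z1 (proj z2) (hproj_mem z2)
    have h2 := hproj_char z2 (proj z1) (hproj_mem z1)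
    have key : ‖proj z1 - proj z2‖ ^ 2 ≤ ⟪z1 - z2, proj z1 - proj z2⟫ := by
      have e1 : 0 ≤ ⟪z1 - proj z1, proj z1 - proj z2⟫ := by
        have hneg : proj z1 - proj z2 = -(proj z2 - proj z1) := (neg_sub _ _).symm
        rw [hneg, inner_neg_right]
        linarith
      have hsplit : z1 - z2 = (z1 - proj z1) + (proj z1 - proj z2) - (z2 - proj z2) := by
        abel
      have := real_inner_self_eq_norm_sq (proj z1 - proj z2)
      rw [hsplit, inner_sub_left, inner_add_left]
      linarith
    have hcs := real_inner_le_norm (z1 - z2) (proj z1 - proj z2)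
    nlinarith [norm_nonneg (proj z1 - proj z2), norm_nonneg (z1 - z2)]
  have hcont : Continuous proj := by
    refine LipschitzWith.continuous (K := 1) (LipschitzWith.of_dist_le_mul fun x y => ?_)
    rw [dist_eq_norm, dist_eq_norm]
    simpa using hlip x y
  -- integrability facts
  have hgi : Integrable g μ := hg.integrable one_le_two
  have hgn : Integrable (fun ω => ‖g ω‖) μ := hgi.norm
  have hgn2 : Integrable (fun ω => ‖g ω‖ ^ 2) μ :=
    (memLp_two_iff_integrable_sq_norm hg.aestronglyMeasurable).mp hg
  -- convexity estimate (pointwise)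
  have hjle : ∀ ω : Ω, j (h ω) - j hstar ≤ ⟪gradj (h ω), h ω - hstar⟫ := by
    intro ω
    have := hconvex (h ω) (hval ω) hstar hstar_mem
    have hneg : hstar - h ω = -(h ω - hstar) := (neg_sub _ _).symm
    rw [hneg, inner_neg_right] at this
    linarith
  by_cases hfint : Integrable (fun ω => ‖proj (h ω - t • g ω) - hstar‖ ^ 2) μ
  swap
  · -- non-integrable case: conditional expectation is zero, RHS is a.e. nonnegative
    rw [condExp_of_not_integrable hfint]
    have hC := condExp_norm_sq_le' hG g hg M hM
    filter_upwards [hC, hcond, hK] with ω hCω hcω hKω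
    simp only [Pi.zero_apply]
    set v := h ω - hstar with hv
    have hj := hjle ω
    have hGv : ⟪(μ[g | mG]) ω, v⟫ ≤ ‖(μ[g | mG]) ω‖ * ‖v‖ := real_inner_le_norm _ _
    have hbv : -(K * ‖v‖) ≤ ⟪b ω, v⟫ := by
      have habs := abs_real_inner_le_norm (b ω) v
      have : ‖b ω‖ * ‖v‖ ≤ K * ‖v‖ := mul_le_mul_of_nonneg_right hKω (norm_nonneg _)
      have := neg_abs_le ⟪b ω, v⟫
      nlinarith [abs_nonneg ⟪b ω, v⟫]
    have hsplit : ⟪gradj (h ω), v⟫ = ⟪(μ[g | mG]) ω, v⟫ - ⟪b ω, v⟫ := by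
      rw [hcω, inner_add_left]
      ring
    nlinarith [sq_nonneg (‖v‖ - t * ‖(μ[g | mG]) ω‖),
      mul_nonneg (sq_nonneg t) (sub_nonneg.2 hCω),
      mul_nonneg ht (norm_nonneg v), norm_nonneg ((μ[g | mG]) ω), norm_nonneg v]
  · -- integrable case: localization
    set S : ℕ → Set Ω := fun n => {ω | ‖h ω - hstar‖ ≤ (n : ℝ)} with hSdef
    have hnormsm : StronglyMeasurable[mG] (fun ω => ‖h ω - hstar‖) :=
      (hmeas.sub stronglyMeasurable_const).norm
    have hS_meas : ∀ n, MeasurableSet[mG] (S n) := fun n =>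
      measurableSet_le hnormsm.measurable measurable_const
    suffices H : ∀ n : ℕ, ∀ᵐ ω ∂μ, ω ∈ S n →
        (μ[(fun ω => ‖proj (h ω - t • g ω) - hstar‖ ^ 2) | mG]) ω ≤
          ‖h ω - hstar‖ ^ 2 - 2 * t * (j (h ω) - j hstar)
            + 2 * t * K * ‖h ω - hstar‖ + t ^ 2 * M by
      filter_upwards [ae_all_iff.2 H] with ω hω
      obtain ⟨n, hn⟩ := exists_nat_ge ‖h ω - hstar‖
      exact hω n hn
    intro n
    set hn : Ω → X := (S n).piecewise h (fun _ => hstar) with hhn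
    have hn_sm : StronglyMeasurable[mG] hn :=
      StronglyMeasurable.piecewise (hS_meas n) hmeas stronglyMeasurable_const
    have hn_val : ∀ ω, hn ω ∈ Xad := by
      intro ω
      by_cases hω : ω ∈ S n
      · simpa [hhn, Set.piecewise_eq_of_mem _ _ _ hω] using hval ω
      · simpa [hhn, Set.piecewise_eq_of_notMem _ _ _ hω] using hstar_mem
    set u : Ω → X := fun ω => hn ω - hstar with hu
    have hu_sm : StronglyMeasurable[mG] u := hn_sm.sub stronglyMeasurable_const
    have hu_b : ∀ ω, ‖u ω‖ ≤ (n : ℝ) := by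
      intro ω
      by_cases hω : ω ∈ S n
      · simpa [hu, hhn, Set.piecewise_eq_of_mem _ _ _ hω] using (show ‖h ω - hstar‖ ≤ n from hω)
      · simp [hu, hhn, Set.piecewise_eq_of_notMem _ _ _ hω]
    have huF : AEStronglyMeasurable[mF] u μ := (hu_sm.mono hG).aestronglyMeasurable
    set fn : Ω → ℝ := fun ω => ‖proj (hn ω - t • g ω) - hstar‖ ^ 2 with hfn
    set φn : Ω → ℝ := fun ω =>
      ‖u ω‖ ^ 2 + ((-(2 * t)) * ⟪g ω, u ω⟫ + t ^ 2 * ‖g ω‖ ^ 2) with hφn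
    -- pointwise bound fn ≤ φn
    have hfle : ∀ ω, fn ω ≤ φn ω := by
      intro ω
      have h1 : fn ω ≤ ‖(hn ω - t • g ω) - hstar‖ ^ 2 := hPle _ _ hstar_mem
      have h2 : (hn ω - t • g ω) - hstar = u ω - t • g ω := by
        simp only [hu]
        abel
      rw [h2] at h1
      have h3 := norm_sub_sq_real (u ω) (t • g ω)
      have h4 : ⟪u ω, t • g ω⟫ = t * ⟪g ω, u ω⟫ := by
        rw [real_inner_smul_right, real_inner_comm]
      have h5 : ‖t • g ω‖ ^ 2 = t ^ 2 * ‖g ω‖ ^ 2 := by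
        rw [norm_smul, Real.norm_eq_abs, abs_of_nonneg ht, mul_pow]
      rw [h4, h5] at h3
      simp only [hφn]
      linarith
    -- integrability
    have i1 : Integrable (fun ω => ‖u ω‖ ^ 2) μ := by
      refine Integrable.mono' (integrable_const ((n : ℝ) ^ 2)) ?_ ?_
      · have : (fun ω => ‖u ω‖ ^ 2) = fun ω => ‖u ω‖ * ‖u ω‖ := funext fun ω => sq ‖u ω‖
        rw [this]
        exact huF.norm.mul huF.norm
      · filter_upwards with ω
        rw [Real.norm_eq_abs, abs_of_nonneg (sq_nonneg _)]
        exact pow_le_pow_left₀ (norm_nonneg _) (hu_b ω) 2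
    have i2 : Integrable (fun ω => ⟪g ω, u ω⟫) μ := by
      refine Integrable.mono' (hgn.mul_const (n : ℝ)) (hg.aestronglyMeasurable.inner huF) ?_
      filter_upwards with ω
      calc ‖⟪g ω, u ω⟫‖ ≤ ‖g ω‖ * ‖u ω‖ := norm_inner_le_norm _ _
        _ ≤ ‖g ω‖ * (n : ℝ) := by gcongr; exact hu_b ω
    have hφ_int : Integrable φn μ := i1.add ((i2.const_mul _).add (hgn2.const_mul _))
    have hfn_meas : AEStronglyMeasurable[mF] fn μ := by
      have h1 : AEStronglyMeasurable[mF] (fun ω => hn ω - t • g ω) μ :=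
        (hn_sm.mono hG).aestronglyMeasurable.sub (hg.aestronglyMeasurable.const_smul t)
      have h2 : AEStronglyMeasurable[mF] (fun ω => ‖proj (hn ω - t • g ω) - hstar‖) μ :=
        ((hcont.comp_aestronglyMeasurable h1).sub aestronglyMeasurable_const).norm
      have : fn = fun ω => ‖proj (hn ω - t • g ω) - hstar‖ * ‖proj (hn ω - t • g ω) - hstar‖ :=
        funext fun ω => sq _
      rw [this]
      exact h2.mul h2
    have hfn_int : Integrable fn μ := by
      refine Integrable.mono' ((integrable_const (2 * (n : ℝ) ^ 2)).add
        ((hgn2.const_mul (2 * t ^ 2)))) hfn_meas ?_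
      filter_upwards with ω
      have h1 : fn ω ≤ ‖u ω - t • g ω‖ ^ 2 := by
        have h1' : fn ω ≤ ‖(hn ω - t • g ω) - hstar‖ ^ 2 := hPle _ _ hstar_mem
        have h2' : (hn ω - t • g ω) - hstar = u ω - t • g ω := by
          simp only [hu]; abel
        rwa [h2'] at h1'
      have h2 := norm_sub_le (u ω) (t • g ω)
      have h3 : ‖t • g ω‖ = t * ‖g ω‖ := by
        rw [norm_smul, Real.norm_eq_abs, abs_of_nonneg ht]
      rw [Real.norm_eq_abs, abs_of_nonneg (sq_nonneg _)]
      simp only [Pi.add_apply]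
      nlinarith [hu_b ω, norm_nonneg (u ω - t • g ω), norm_nonneg (u ω), norm_nonneg (g ω),
        mul_nonneg ht (norm_nonneg (g ω)), sq_nonneg (‖u ω‖ - t * ‖g ω‖)]
    -- conditional expectation computation
    have cc1 : μ[fn | mG] ≤ᵐ[μ] μ[φn | mG] :=
      condExp_mono hfn_int hφ_int (Filter.Eventually.of_forall hfle)
    have e1 : μ[φn | mG] =ᵐ[μ] μ[(fun ω => ‖u ω‖ ^ 2) | mG]
        + μ[(fun ω => (-(2 * t)) * ⟪g ω, u ω⟫ + t ^ 2 * ‖g ω‖ ^ 2) | mG] :=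
      condExp_add i1 ((i2.const_mul _).add (hgn2.const_mul _)) mG
    have e2 : μ[(fun ω => ‖u ω‖ ^ 2) | mG] = fun ω => ‖u ω‖ ^ 2 := by
      refine condExp_of_stronglyMeasurable hG ?_ i1
      have : (fun ω => ‖u ω‖ ^ 2) = fun ω => ‖u ω‖ * ‖u ω‖ := funext fun ω => sq _
      rw [this]
      exact hu_sm.norm.mul hu_sm.norm
    have e3 : μ[(fun ω => (-(2 * t)) * ⟪g ω, u ω⟫ + t ^ 2 * ‖g ω‖ ^ 2) | mG] =ᵐ[μ]
        μ[(fun ω => (-(2 * t)) * ⟪g ω, u ω⟫) | mG] + μ[(fun ω => t ^ 2 * ‖g ω‖ ^ 2) | mG] :=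
      condExp_add (i2.const_mul _) (hgn2.const_mul _) mG
    have e4 : μ[(fun ω => (-(2 * t)) * ⟪g ω, u ω⟫) | mG] =ᵐ[μ]
        fun ω => (-(2 * t)) * (μ[(fun ω => ⟪g ω, u ω⟫) | mG]) ω := by
      have h4 : (fun ω => (-(2 * t)) * ⟪g ω, u ω⟫) = (-(2 * t)) • (fun ω => ⟪g ω, u ω⟫) :=
        funext fun ω => by simp [smul_eq_mul]
      rw [h4]
      filter_upwards [condExp_smul (μ := μ) (m := mG) (-(2 * t)) (fun ω => ⟪g ω, u ω⟫)]
        with ω hω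
      simp only [hω, Pi.smul_apply, smul_eq_mul]
    have e5 : μ[(fun ω => ⟪g ω, u ω⟫) | mG] =ᵐ[μ] fun ω => ⟪(μ[g | mG]) ω, u ω⟫ :=
      condExp_inner_stronglyMeasurable' hG g hg u hu_sm (n : ℝ) (Nat.cast_nonneg n) hu_b
    have e6 : μ[(fun ω => t ^ 2 * ‖g ω‖ ^ 2) | mG] =ᵐ[μ]
        fun ω => t ^ 2 * (μ[(fun ω => ‖g ω‖ ^ 2) | mG]) ω := by
      have h4 : (fun ω => t ^ 2 * ‖g ω‖ ^ 2) = (t ^ 2) • (fun ω => ‖g ω‖ ^ 2) :=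
        funext fun ω => by simp [smul_eq_mul]
      rw [h4]
      filter_upwards [condExp_smul (μ := μ) (m := mG) (t ^ 2) (fun ω => ‖g ω‖ ^ 2)] with ω hω
      simp only [hω, Pi.smul_apply, smul_eq_mul]
    -- combine into a bound on μ[φn|mG]
    have cc2 : μ[φn | mG] ≤ᵐ[μ] fun ω =>
        ‖u ω‖ ^ 2 + ((-(2 * t)) * ⟪gradj (h ω) + b ω, u ω⟫ + t ^ 2 * M) := by
      filter_upwards [e1, e3, e4, e5, e6, hcond, hM] with ω h1' h3' h4' h5' h6' hcω hMω
      simp only [Pi.add_apply] at h1' h3'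
      have e2' : (μ[(fun ω => ‖u ω‖ ^ 2) | mG]) ω = ‖u ω‖ ^ 2 := by rw [e2]
      rw [h1', e2', h3', h4', h5', h6', hcω]
      have hMb : t ^ 2 * (μ[(fun ω => ‖g ω‖ ^ 2) | mG]) ω ≤ t ^ 2 * M :=
        mul_le_mul_of_nonneg_left hMω (sq_nonneg t)
      linarith
    -- the target bound on S n
    have hΨR : ∀ᵐ ω ∂μ, ω ∈ S n →
        ‖u ω‖ ^ 2 + ((-(2 * t)) * ⟪gradj (h ω) + b ω, u ω⟫ + t ^ 2 * M) ≤
          ‖h ω - hstar‖ ^ 2 - 2 * t * (j (h ω) - j hstar)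
            + 2 * t * K * ‖h ω - hstar‖ + t ^ 2 * M := by
      filter_upwards [hK] with ω hKω hmem
      have huω : u ω = h ω - hstar := by
        simp only [hu, hhn, Set.piecewise_eq_of_mem _ _ _ hmem]
      rw [huω, inner_add_left]
      have hj := hjle ω
      have hbv : -(K * ‖h ω - hstar‖) ≤ ⟪b ω, h ω - hstar⟫ := by
        have habs := abs_real_inner_le_norm (b ω) (h ω - hstar)
        have hKmul : ‖b ω‖ * ‖h ω - hstar‖ ≤ K * ‖h ω - hstar‖ :=
          mul_le_mul_of_nonneg_right hKω (norm_nonneg _)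
        have hneg := neg_abs_le ⟪b ω, h ω - hstar⟫
        linarith
      have h2t : (0 : ℝ) ≤ 2 * t := by linarith
      nlinarith [mul_nonneg h2t (sub_nonneg.2 hj),
        mul_nonneg h2t (by linarith : (0:ℝ) ≤ ⟪b ω, h ω - hstar⟫ + K * ‖h ω - hstar‖)]
    -- locality of the conditional expectation
    have l1 : μ[(fun ω => ‖proj (h ω - t • g ω) - hstar‖ ^ 2) | mG]
        =ᵐ[μ.restrict (S n)] μ[fn | mG] := by
      have a1 := condExp_restrict_ae_eq_restrict hG (hS_meas n) hfint
      have a2 := condExp_restrict_ae_eq_restrict hG (hS_meas n) hfn_int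
      have a3 : (fun ω => ‖proj (h ω - t • g ω) - hstar‖ ^ 2) =ᵐ[μ.restrict (S n)] fn := by
        filter_upwards [ae_restrict_mem (hG _ (hS_meas n))] with ω hω
        simp only [hfn, hhn, Set.piecewise_eq_of_mem _ _ _ hω]
      exact a1.symm.trans ((condExp_congr_ae a3).trans a2)
    have lfinal : μ[(fun ω => ‖proj (h ω - t • g ω) - hstar‖ ^ 2) | mG]
        ≤ᵐ[μ.restrict (S n)] fun ω =>
          ‖h ω - hstar‖ ^ 2 - 2 * t * (j (h ω) - j hstar)
            + 2 * t * K * ‖h ω - hstar‖ + t ^ 2 * M := by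
      filter_upwards [l1, ae_restrict_of_ae (cc1.and cc2), ae_restrict_of_ae hΨR,
        ae_restrict_mem (hG _ (hS_meas n))] with ω hl hc hΨ hmem
      rw [hl]
      exact (hc.1.trans hc.2).trans (hΨ hmem)
    exact ae_imp_of_ae_restrict lfinal
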